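/- Let ℓ : ℝ^p → ℝ be continuously differentiable with x ↦ ℓ(x) + (κ/2)‖x‖₂² convex for some κ > 0, let C_1, …, C_m ⊆ ℝ^p be nonempty closed convex sets, suppose f_κ(x) = ℓ(x) + (κ/2) Σ_{i=1}^m dist(x, C_i)² is coercive, and let μ > κ. Let (x_n) be the MM iterates x_{n+1} = argmin_y [ℓ(y) + (μ/2) Σ_{i=1}^m ‖y − P_{C_i}(x_n)‖₂²] for the penalized objective f_μ(x) = ℓ(x) + (μ/2) Σ_{i=1}^m dist(x, C_i)². Then: (i) every cluster point of (x_n) is a stationary point of f_μ (i.e., satisfies ∇f_μ(x) = 0); (ii) if f_μ has only finitely many stationary points, the iterates converge to one of them; and (iii) if f_μ has a unique stationary point, the iterates converge to that point, which is the global minimizer of f_μ. -/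

import Mathlib

open Filter Metric InnerProductSpace Topology

section MMAux

variable {E : Type*} [NormedAddCommGroup E] [InnerProductSpace ℝ E]

lemma mm_aux_var_ineq {C : Set E} (hcv : Convex ℝ C) {x q : E} (hq : q ∈ C)
    (hmin : ∀ z ∈ C, ‖x - q‖ ≤ ‖x - z‖) : ∀ z ∈ C, ⟪x - q, z - q⟫_ℝ ≤ 0 := by
  have hnon : Nonempty C := ⟨⟨q, hq⟩⟩
  have heq : ‖x - q‖ = ⨅ w : C, ‖x - w‖ := by
    refine le_antisymm (le_ciInf fun w => hmin w w.2) (ciInf_le (⟨0, ?_⟩ : BddBelow (Set.range fun w : C => ‖x - w‖)) ⟨q, hq⟩)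
    rintro r ⟨w, rfl⟩; exact norm_nonneg _
  exact (norm_eq_iInf_iff_real_inner_le_zero hcv hq).1 heq

lemma mm_aux_nonexpansive {C : Set E} (hcv : Convex ℝ C) {a b qa qb : E} (hqa : qa ∈ C)
    (hqb : qb ∈ C) (hma : ∀ z ∈ C, ‖a - qa‖ ≤ ‖a - z‖) (hmb : ∀ z ∈ C, ‖b - qb‖ ≤ ‖b - z‖) :
    ‖qa - qb‖ ≤ ‖a - b‖ := by
  have h1 : ⟪a - qa, qb - qa⟫_ℝ ≤ 0 := mm_aux_var_ineq hcv hqa hma qb hqb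
  have h2 : ⟪b - qb, qa - qb⟫_ℝ ≤ 0 := mm_aux_var_ineq hcv hqb hmb qa hqa
  have key : ‖qa - qb‖ ^ 2 ≤ ⟪a - b, qa - qb⟫_ℝ := by
    have e : ⟪a - b, qa - qb⟫_ℝ
        = ‖qa - qb‖ ^ 2 + (-⟪a - qa, qb - qa⟫_ℝ) + (-⟪b - qb, qa - qb⟫_ℝ) := by
      rw [← real_inner_self_eq_norm_sq]
      simp only [inner_sub_left, inner_sub_right]
      ring
    linarith
  have h3 : ⟪a - b, qa - qb⟫_ℝ ≤ ‖a - b‖ * ‖qa - qb‖ := real_inner_le_norm _ _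
  nlinarith [norm_nonneg (qa - qb), norm_nonneg (a - b)]

lemma mm_aux_midpoint (u v c : E) :
    ‖(1/2 : ℝ) • u + (1/2 : ℝ) • v - c‖ ^ 2
      = 1/2 * ‖u - c‖ ^ 2 + 1/2 * ‖v - c‖ ^ 2 - 1/4 * ‖u - v‖ ^ 2 := by
  have h : (1/2 : ℝ) • u + (1/2 : ℝ) • v - c = (1/2 : ℝ) • ((u - c) + (v - c)) := by
    match_scalars <;> ring
  rw [h, norm_smul]
  have hpar := parallelogram_law_with_norm ℝ (u - c) (v - c)
  have h2 : (u - c) - (v - c) = u - v := by abel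
  rw [h2] at hpar
  have : |(1/2 : ℝ)| = 1/2 := by norm_num
  rw [Real.norm_eq_abs, this, mul_pow]
  nlinarith [hpar]

omit [InnerProductSpace ℝ E] in
lemma mm_aux_dummy : True := trivial

variable [CompleteSpace E]

lemma mm_aux_fderiv_sq (c w : E) :
    HasFDerivAt (fun y : E => ‖y - c‖ ^ 2) ((toDual ℝ E) ((2:ℝ) • (w - c))) w := by
  have h1 : HasFDerivAt (fun y : E => y - c) (ContinuousLinearMap.id ℝ E) w :=
    (hasFDerivAt_id w).sub_const c
  have h2 := h1.inner ℝ h1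
  have h3 : (fun y : E => ‖y - c‖ ^ 2) = fun y : E => ⟪y - c, y - c⟫_ℝ :=
    funext fun y => (real_inner_self_eq_norm_sq _).symm
  rw [h3]
  refine h2.congr_fderiv ?_
  ext v
  simp only [fderivInnerCLM_apply, toDual_apply_apply, real_inner_smul_left,
    ContinuousLinearMap.coe_comp', Function.comp_apply, ContinuousLinearMap.prod_apply,
    ContinuousLinearMap.coe_id', id_eq]
  rw [real_inner_comm v (w - c)]
  ring

lemma mm_aux_surrogate_grad {m : ℕ} (μ : ℝ) (L : E → ℝ) (gL : E → E)
    (hdiff : ∀ v, HasGradientAt L (gL v) v) (c : Fin m → E) (w : E) :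
    HasFDerivAt (fun y : E => L y + μ / 2 * ∑ i, ‖y - c i‖ ^ 2)
      ((toDual ℝ E) (gL w + μ • ∑ i, (w - c i))) w := by
  have hL : HasFDerivAt L ((toDual ℝ E) (gL w)) w := hasGradientAt_iff_hasFDerivAt.1 (hdiff w)
  have hsum : HasFDerivAt (fun y : E => ∑ i, ‖y - c i‖ ^ 2)
      (∑ i, (toDual ℝ E) ((2:ℝ) • (w - c i))) w :=
    HasFDerivAt.fun_sum fun i _ => mm_aux_fderiv_sq (c i) w
  have h := hL.add (hsum.const_mul (μ / 2))
  refine h.congr_fderiv ?_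
  symm
  rw [map_add, map_smul]
  congr 1
  rw [map_sum]
  simp only [map_smul, Finset.smul_sum, smul_smul]
  apply Finset.sum_congr rfl
  intro i _
  norm_num

lemma mm_aux_min_grad_zero {m : ℕ} (μ : ℝ) (L : E → ℝ) (gL : E → E)
    (hdiff : ∀ v, HasGradientAt L (gL v) v) (c : Fin m → E) (w : E)
    (hmin : ∀ y, L w + μ / 2 * ∑ i, ‖w - c i‖ ^ 2 ≤ L y + μ / 2 * ∑ i, ‖y - c i‖ ^ 2) :
    gL w + μ • ∑ i, (w - c i) = 0 := by
  have hloc : IsLocalMin (fun y : E => L y + μ / 2 * ∑ i, ‖y - c i‖ ^ 2) w :=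
    Filter.Eventually.of_forall hmin
  have h0 := hloc.hasFDerivAt_eq_zero (mm_aux_surrogate_grad μ L gL hdiff c w)
  exact (InnerProductSpace.toDual ℝ E).injective (by rw [h0, map_zero])

lemma mm_aux_suff_dec {m : ℕ} (κ μ : ℝ) (L : E → ℝ)
    (hconv : ConvexOn ℝ Set.univ (fun v => L v + κ / 2 * ‖v‖ ^ 2)) (c : Fin m → E) (w : E)
    (hmin : ∀ y, L w + μ / 2 * ∑ i, ‖w - c i‖ ^ 2 ≤ L y + μ / 2 * ∑ i, ‖y - c i‖ ^ 2) (y : E) :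
    L w + μ / 2 * ∑ i, ‖w - c i‖ ^ 2 + (m * μ - κ) / 4 * ‖y - w‖ ^ 2
      ≤ L y + μ / 2 * ∑ i, ‖y - c i‖ ^ 2 := by
  set md := (1/2 : ℝ) • y + (1/2 : ℝ) • w with hmd
  have hφ2 : L md + κ / 2 * ‖md‖ ^ 2
      ≤ 1/2 * (L y + κ / 2 * ‖y‖ ^ 2) + 1/2 * (L w + κ / 2 * ‖w‖ ^ 2) := by
    have h := hconv.2 (Set.mem_univ y) (Set.mem_univ w) (by norm_num : (0:ℝ) ≤ 1/2)
      (by norm_num : (0:ℝ) ≤ 1/2) (by norm_num : (1/2 : ℝ) + 1/2 = 1)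
    simp only [smul_eq_mul] at h
    rw [← hmd] at h
    exact h
  have hmid2 : ‖md‖ ^ 2 = 1/2 * ‖y‖ ^ 2 + 1/2 * ‖w‖ ^ 2 - 1/4 * ‖y - w‖ ^ 2 := by
    have h := mm_aux_midpoint y w (0 : E)
    rw [← hmd] at h
    simpa using h
  have hsum : ∑ i, ‖md - c i‖ ^ 2
      = 1/2 * ∑ i, ‖y - c i‖ ^ 2 + 1/2 * ∑ i, ‖w - c i‖ ^ 2 - (m : ℝ)/4 * ‖y - w‖ ^ 2 := by
    have h1 : ∀ i ∈ Finset.univ, ‖md - c i‖ ^ 2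
        = 1/2 * ‖y - c i‖ ^ 2 + 1/2 * ‖w - c i‖ ^ 2 - 1/4 * ‖y - w‖ ^ 2 := by
      intro i _
      rw [hmd]; exact mm_aux_midpoint y w (c i)
    rw [Finset.sum_congr rfl h1, Finset.sum_sub_distrib, Finset.sum_add_distrib,
      ← Finset.mul_sum, ← Finset.mul_sum, Finset.sum_const, Finset.card_univ, Fintype.card_fin,
      nsmul_eq_mul]
    ring
  have hmin' := hmin md
  have hφ' : L md ≤ 1/2 * L y + 1/2 * L w + κ / 8 * ‖y - w‖ ^ 2 := by
    have hc : κ / 2 * ‖md‖ ^ 2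
        = κ / 2 * (1/2 * ‖y‖ ^ 2 + 1/2 * ‖w‖ ^ 2 - 1/4 * ‖y - w‖ ^ 2) := by rw [hmid2]
    linarith [hφ2, hc]
  have hkey : L md + μ / 2 * ∑ i, ‖md - c i‖ ^ 2
      ≤ 1/2 * (L y + μ / 2 * ∑ i, ‖y - c i‖ ^ 2) + 1/2 * (L w + μ / 2 * ∑ i, ‖w - c i‖ ^ 2)
        - ((m : ℝ) * μ - κ) / 8 * ‖y - w‖ ^ 2 := by
    have hs : μ / 2 * ∑ i, ‖md - c i‖ ^ 2
        = μ / 2 * (1/2 * ∑ i, ‖y - c i‖ ^ 2 + 1/2 * ∑ i, ‖w - c i‖ ^ 2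
            - (m : ℝ)/4 * ‖y - w‖ ^ 2) := by rw [hsum]
    linarith [hφ', hs]
  linarith [hmin', hkey]

end MMAux


set_option maxHeartbeats 1000000 in
/-- Convergence of the MM iterates for the penalized objective
`f_μ(x) = ℓ(x) + (μ/2) ∑ᵢ dist(x, Cᵢ)²`: (i) every cluster point of the iterates is a
stationary point of `f_μ`; (ii) if `f_μ` has finitely many stationary points, the iterates
converge to one of them; (iii) if `f_μ` has a unique stationary point, the iterates converge
to it and it is the global minimizer of `f_μ`. -/
theorem mm_iterates_convergence (p m : ℕ) (hm : 1 ≤ m)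
    (κ : ℝ) (hκ : 0 < κ)
    (L : EuclideanSpace ℝ (Fin p) → ℝ)
    (gL : EuclideanSpace ℝ (Fin p) → EuclideanSpace ℝ (Fin p))
    (hdiff : ∀ x, HasGradientAt L (gL x) x)
    (hcont : Continuous gL)
    (hconv : ConvexOn ℝ Set.univ (fun x => L x + κ / 2 * ‖x‖ ^ 2))
    (C : Fin m → Set (EuclideanSpace ℝ (Fin p)))
    (hne : ∀ i, (C i).Nonempty) (hcl : ∀ i, IsClosed (C i)) (hcv : ∀ i, Convex ℝ (C i))
    (P : Fin m → EuclideanSpace ℝ (Fin p) → EuclideanSpace ℝ (Fin p))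
    (hP : ∀ i x, P i x ∈ C i ∧ ∀ z ∈ C i, ‖x - P i x‖ ≤ ‖x - z‖)
    (hcoercive : Filter.Tendsto
      (fun x : EuclideanSpace ℝ (Fin p) =>
        L x + κ / 2 * ∑ i, (Metric.infDist x (C i)) ^ 2)
      (Filter.cocompact _) Filter.atTop)
    (μ : ℝ) (hμ : κ < μ)
    (fμ : EuclideanSpace ℝ (Fin p) → ℝ)
    (hfμ : ∀ x, fμ x = L x + μ / 2 * ∑ i, (Metric.infDist x (C i)) ^ 2)
    -- stationary points of `f_μ`, since `∇f_μ(x) = ∇ℓ(x) + μ ∑ᵢ [x − P_{Cᵢ}(x)]`: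
    (Stat : Set (EuclideanSpace ℝ (Fin p)))
    (hStat : Stat = {z | gL z + μ • ∑ i, (z - P i z) = 0})
    (x : ℕ → EuclideanSpace ℝ (Fin p))
    (hiter : ∀ n, ∀ y, L (x (n + 1)) + μ / 2 * ∑ i, ‖x (n + 1) - P i (x n)‖ ^ 2 ≤
                       L y + μ / 2 * ∑ i, ‖y - P i (x n)‖ ^ 2) :
    (∀ z, (∃ φ : ℕ → ℕ, StrictMono φ ∧ Filter.Tendsto (x ∘ φ) Filter.atTop (nhds z)) →
        z ∈ Stat) ∧
    (Stat.Finite → ∃ z ∈ Stat, Filter.Tendsto x Filter.atTop (nhds z)) ∧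
    (∀ z, Stat = {z} →
        Filter.Tendsto x Filter.atTop (nhds z) ∧ ∀ y, fμ z ≤ fμ y) := by
  classical
  have hμpos : (0:ℝ) < μ := hκ.trans hμ
  have hm1 : (1:ℝ) ≤ (m:ℝ) := by exact_mod_cast hm
  have hσ : 0 < ((m:ℝ) * μ - κ) := by nlinarith
  -- distance to a set equals distance to the projection
  have hdistP : ∀ i (v : EuclideanSpace ℝ (Fin p)), Metric.infDist v (C i) = ‖v - P i v‖ := by
    intro i v
    refine le_antisymm ?_ ?_
    · have h := Metric.infDist_le_dist_of_mem (x := v) (hP i v).1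
      rwa [dist_eq_norm] at h
    · by_contra hlt
      push_neg at hlt
      obtain ⟨z, hz, hd⟩ := (Metric.infDist_lt_iff (hne i)).1 hlt
      have h2 := (hP i v).2 z hz
      rw [dist_eq_norm] at hd
      linarith
  -- fμ agrees with the surrogate anchored at the same point
  have hfself : ∀ v, fμ v = L v + μ/2 * ∑ i, ‖v - P i v‖^2 := by
    intro v
    rw [hfμ v, Finset.sum_congr rfl (fun i _ => by rw [hdistP i v])]
  -- fμ is majorized by the surrogate anchored anywhere
  have hmaj : ∀ (v y : EuclideanSpace ℝ (Fin p)),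
      fμ y ≤ L y + μ/2 * ∑ i, ‖y - P i v‖^2 := by
    intro v y
    rw [hfμ y]
    have hterm : ∀ i ∈ Finset.univ, (Metric.infDist y (C i))^2 ≤ ‖y - P i v‖^2 := by
      intro i _
      have h1 : Metric.infDist y (C i) ≤ ‖y - P i v‖ := by
        have h := Metric.infDist_le_dist_of_mem (x := y) (hP i v).1
        rwa [dist_eq_norm] at h
      exact pow_le_pow_left₀ Metric.infDist_nonneg h1 2
    have hsum := Finset.sum_le_sum hterm
    have h2 := mul_le_mul_of_nonneg_left hsum (by positivity : (0:ℝ) ≤ μ/2)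
    linarith
  -- first-order condition at the iterates
  have hstar : ∀ n, gL (x (n+1)) + μ • ∑ i, (x (n+1) - P i (x n)) = 0 := fun n =>
    mm_aux_min_grad_zero μ L gL hdiff (fun i => P i (x n)) (x (n+1)) (hiter n)
  -- sufficient decrease
  have hdesc : ∀ n, fμ (x (n+1)) + ((m:ℝ)*μ - κ)/4 * ‖x n - x (n+1)‖^2 ≤ fμ (x n) := by
    intro n
    have h := mm_aux_suff_dec κ μ L hconv (fun i => P i (x n)) (x (n+1)) (hiter n) (x n)
    have h2 := hmaj (x n) (x (n+1))
    rw [hfself (x n)]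
    linarith
  have hsucc : ∀ n, fμ (x (n+1)) ≤ fμ (x n) := by
    intro n
    have h := hdesc n
    have h2 : 0 ≤ ((m:ℝ)*μ - κ)/4 * ‖x n - x (n+1)‖^2 :=
      mul_nonneg (by positivity) (sq_nonneg _)
    linarith
  have hanti : Antitone fun n => fμ (x n) := antitone_nat_of_succ_le hsucc
  -- fκ ≤ fμ pointwise
  have hfκμ : ∀ v, L v + κ/2 * ∑ i, (Metric.infDist v (C i))^2 ≤ fμ v := by
    intro v
    rw [hfμ v]
    have hS : (0:ℝ) ≤ ∑ i, (Metric.infDist v (C i))^2 :=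
      Finset.sum_nonneg fun i _ => sq_nonneg _
    nlinarith [hμ.le]
  -- compact set containing all iterates
  obtain ⟨K, hKc, hKout⟩ : ∃ K, IsCompact K ∧ ∀ v ∉ K,
      fμ (x 0) + 1 ≤ L v + κ/2 * ∑ i, (Metric.infDist v (C i))^2 := by
    have hev := hcoercive.eventually (Filter.eventually_ge_atTop (fμ (x 0) + 1))
    rw [Filter.hasBasis_cocompact.eventually_iff] at hev
    obtain ⟨K, hK1, hK2⟩ := hev
    exact ⟨K, hK1, fun v hv => hK2 hv⟩
  have hxK : ∀ n, x n ∈ K := by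
    intro n
    by_contra hn
    have h1 := hKout _ hn
    have h2 := hfκμ (x n)
    have h3 := hanti (Nat.zero_le n)
    simp only at h3
    linarith
  -- continuity
  have hLc : Continuous L := by
    rw [continuous_iff_continuousAt]
    exact fun v => (hdiff v).differentiableAt.continuousAt
  have hfμc : Continuous fμ := by
    have he : fμ = fun v => L v + μ/2 * ∑ i, (Metric.infDist v (C i))^2 := funext hfμ
    rw [he]
    exact hLc.add (continuous_const.mul
      (continuous_finset_sum _ fun i _ => (Metric.continuous_infDist_pt (C i)).pow 2))
  have hPcont : ∀ i, Continuous (P i) := by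
    intro i
    have hlip : LipschitzWith 1 (P i) := by
      apply LipschitzWith.of_dist_le_mul
      intro a b
      rw [dist_eq_norm, dist_eq_norm, NNReal.coe_one, one_mul]
      exact mm_aux_nonexpansive (hcv i) (hP i a).1 (hP i b).1 (hP i a).2 (hP i b).2
    exact hlip.continuous
  -- the values fμ (x n) converge
  have hbdd : BddBelow (Set.range fun n => fμ (x n)) := by
    obtain ⟨z₀, hz₀K, hz₀min⟩ := hKc.exists_isMinOn ⟨x 0, hxK 0⟩ hfμc.continuousOn
    refine ⟨fμ z₀, ?_⟩
    rintro r ⟨n, rfl⟩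
    exact hz₀min (hxK n)
  have hdlim := tendsto_atTop_ciInf hanti hbdd
  -- step sizes tend to zero
  have hstep2 : Tendsto (fun n => ‖x n - x (n+1)‖^2) atTop (𝓝 0) := by
    have hb : ∀ n, ‖x n - x (n+1)‖^2
        ≤ 4/((m:ℝ)*μ - κ) * (fμ (x n) - fμ (x (n+1))) := by
      intro n
      have h := hdesc n
      have h1 : ((m:ℝ)*μ - κ)/4 * ‖x n - x (n+1)‖^2 ≤ fμ (x n) - fμ (x (n+1)) := by linarith
      have h2 := mul_le_mul_of_nonneg_left h1 (by positivity : (0:ℝ) ≤ 4/((m:ℝ)*μ - κ))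
      calc ‖x n - x (n+1)‖^2
          = 4/((m:ℝ)*μ - κ) * (((m:ℝ)*μ - κ)/4 * ‖x n - x (n+1)‖^2) := by
            field_simp
        _ ≤ 4/((m:ℝ)*μ - κ) * (fμ (x n) - fμ (x (n+1))) := h2
    have hlim : Tendsto (fun n => 4/((m:ℝ)*μ - κ) * (fμ (x n) - fμ (x (n+1))))
        atTop (𝓝 0) := by
      have h1 : Tendsto (fun n => fμ (x (n+1))) atTop (𝓝 (⨅ n, fμ (x n))) :=
        hdlim.comp (tendsto_add_atTop_nat 1)
      have h2 := (hdlim.sub h1).const_mul (4/((m:ℝ)*μ - κ))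
      simpa using h2
    exact squeeze_zero (fun n => sq_nonneg _) hb hlim
  have hstep : Tendsto (fun n => ‖x n - x (n+1)‖) atTop (𝓝 0) := by
    have h := (Real.continuous_sqrt.tendsto' 0 0 Real.sqrt_zero).comp hstep2
    exact h.congr fun n => Real.sqrt_sq (norm_nonneg _)
  have hvec : Tendsto (fun n => x n - x (n+1)) atTop (𝓝 0) :=
    tendsto_zero_iff_norm_tendsto_zero.2 hstep
  -- PART (i): cluster points are stationary
  have hcluster : ∀ z, (∃ φ : ℕ → ℕ, StrictMono φ ∧ Tendsto (x ∘ φ) atTop (𝓝 z)) →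
      z ∈ Stat := by
    rintro z ⟨φ, hφm, hφt⟩
    have hφat : Tendsto φ atTop atTop := hφm.tendsto_atTop
    have h1 : Tendsto (fun k => x (φ k + 1)) atTop (𝓝 z) := by
      have h2 : Tendsto (fun k => x (φ k) - x (φ k + 1)) atTop (𝓝 0) := hvec.comp hφat
      have h3 := hφt.sub h2
      rw [sub_zero] at h3
      exact h3.congr fun k => by simp [Function.comp]
    have h2 : Tendsto (fun k => gL (x (φ k + 1)) + μ • ∑ i, (x (φ k + 1) - P i (x (φ k))))
        atTop (𝓝 (gL z + μ • ∑ i, (z - P i z))) := by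
      apply Tendsto.add
      · exact (hcont.tendsto z).comp h1
      · apply Tendsto.const_smul
        apply tendsto_finset_sum
        intro i _
        exact h1.sub (((hPcont i).tendsto z).comp hφt)
    have h3 : Tendsto (fun _ : ℕ => (0 : EuclideanSpace ℝ (Fin p))) atTop
        (𝓝 (gL z + μ • ∑ i, (z - P i z))) :=
      h2.congr fun k => hstar (φ k)
    have h4 := tendsto_nhds_unique h3 tendsto_const_nhds
    rw [hStat]
    exact h4
  -- PART (ii): finite stationary set implies convergence
  have hconv2 : Stat.Finite → ∃ z ∈ Stat, Tendsto x atTop (𝓝 z) := by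
    intro hfin
    obtain ⟨a, -, φ, hφm, hφt⟩ := hKc.tendsto_subseq hxK
    have haS : a ∈ Stat := hcluster a ⟨φ, hφm, hφt⟩
    refine ⟨a, haS, ?_⟩
    obtain ⟨ε₀, hε₀, hsep⟩ : ∃ ε₀ > 0, ∀ b ∈ Stat, ∀ b' ∈ Stat, b ≠ b' →
        3 * ε₀ ≤ dist b b' := by
      set s := hfin.toFinset with hs
      set t := ((s ×ˢ s).filter fun q => q.1 ≠ q.2).image fun q => dist q.1 q.2 with ht
      by_cases hnet : t.Nonempty
      · refine ⟨t.min' hnet / 3, ?_, ?_⟩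
        · obtain ⟨q, hq, hqd⟩ := Finset.mem_image.1 (t.min'_mem hnet)
          have hne2 : q.1 ≠ q.2 := (Finset.mem_filter.1 hq).2
          have hdp : 0 < dist q.1 q.2 := dist_pos.2 hne2
          linarith
        · intro b hb b' hb' hbb
          have hmem : dist b b' ∈ t := Finset.mem_image.2
            ⟨(b, b'), Finset.mem_filter.2
              ⟨Finset.mem_product.2 ⟨hfin.mem_toFinset.2 hb, hfin.mem_toFinset.2 hb'⟩, hbb⟩, rfl⟩
          have := t.min'_le _ hmem
          linarith
      · refine ⟨1, one_pos, fun b hb b' hb' hbb => absurd ?_ hnet⟩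
        exact ⟨dist b b', Finset.mem_image.2
          ⟨(b, b'), Finset.mem_filter.2
            ⟨Finset.mem_product.2 ⟨hfin.mem_toFinset.2 hb, hfin.mem_toFinset.2 hb'⟩, hbb⟩, rfl⟩⟩
    rw [Metric.tendsto_atTop]
    intro ε hε
    set ε' := min ε ε₀ with hε'def
    have hε'pos : 0 < ε' := lt_min hε hε₀
    have hε'ε : ε' ≤ ε := min_le_left _ _
    have hε'ε₀ : ε' ≤ ε₀ := min_le_right _ _
    have hU : ∀ᶠ n in atTop, ∃ b ∈ Stat, dist (x n) b < ε' := by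
      by_contra hcon
      rw [Filter.not_eventually] at hcon
      obtain ⟨ψ, hψm, hψP⟩ := Filter.extraction_of_frequently_atTop hcon
      obtain ⟨z, -, ρ, hρm, hρt⟩ := hKc.tendsto_subseq (fun k => hxK (ψ k))
      have hzS : z ∈ Stat := hcluster z ⟨ψ ∘ ρ, hψm.comp hρm, hρt⟩
      have hd : Tendsto (fun k => dist (x (ψ (ρ k))) z) atTop (𝓝 0) := by
        have h := tendsto_iff_dist_tendsto_zero.1 hρt
        simpa [Function.comp] using h
      have hge : ∀ k, ε' ≤ dist (x (ψ (ρ k))) z := by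
        intro k
        by_contra hlt
        push_neg at hlt
        exact hψP (ρ k) ⟨z, hzS, hlt⟩
      have hle := ge_of_tendsto hd (Filter.Eventually.of_forall hge)
      linarith
    have hss : ∀ᶠ n in atTop, dist (x n) (x (n+1)) < ε' := by
      have hd : Tendsto (fun n => dist (x n) (x (n+1))) atTop (𝓝 0) := by
        simpa [dist_eq_norm] using hstep
      exact hd.eventually_lt_const hε'pos
    obtain ⟨N, hN⟩ := Filter.eventually_atTop.1 (hU.and hss)
    obtain ⟨n₀, hn₀N, hn₀⟩ : ∃ n₀ ≥ N, dist (x n₀) a < ε' := by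
      obtain ⟨M, hM⟩ := Metric.tendsto_atTop.1 hφt ε' hε'pos
      refine ⟨φ (max M N), le_trans (le_max_right M N) (hφm.le_apply), ?_⟩
      exact hM (max M N) (le_max_left M N)
    have htrap : ∀ n, n₀ ≤ n → dist (x n) a < ε' := by
      intro n hn
      induction n, hn using Nat.le_induction with
      | base => exact hn₀
      | succ n hn ih =>
        obtain ⟨b, hbS, hb⟩ := (hN (n+1) (by omega)).1
        have hstepn := (hN n (by omega)).2
        by_cases hba : b = a
        · rw [hba] at hb; exact hb
        · exfalso
          have h3 := hsep a haS b hbS (Ne.symm hba)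
          have h4 : dist a b ≤ dist a (x n) + dist (x n) (x (n+1)) + dist (x (n+1)) b :=
            calc dist a b ≤ dist a (x (n+1)) + dist (x (n+1)) b := dist_triangle _ _ _
              _ ≤ dist a (x n) + dist (x n) (x (n+1)) + dist (x (n+1)) b := by
                  linarith [dist_triangle a (x n) (x (n+1))]
          rw [dist_comm a (x n)] at h4
          linarith
    exact ⟨n₀, fun n hn => lt_of_lt_of_le (htrap n hn) hε'ε⟩
  refine ⟨hcluster, hconv2, ?_⟩
  -- PART (iii)
  intro z hz
  have hfin : Stat.Finite := hz ▸ Set.finite_singleton z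
  obtain ⟨z', hz', hzt⟩ := hconv2 hfin
  rw [hz, Set.mem_singleton_iff] at hz'
  subst hz'
  refine ⟨hzt, ?_⟩
  have hfμcoer : Tendsto fμ (Filter.cocompact _) atTop :=
    tendsto_atTop_mono hfκμ hcoercive
  obtain ⟨w, hw⟩ := hfμc.exists_forall_le hfμcoer
  have hwS : w ∈ Stat := by
    have hminsur : ∀ y, L w + μ/2 * ∑ i, ‖w - P i w‖^2 ≤ L y + μ/2 * ∑ i, ‖y - P i w‖^2 := by
      intro y
      calc L w + μ/2 * ∑ i, ‖w - P i w‖^2 = fμ w := (hfself w).symm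
        _ ≤ fμ y := hw y
        _ ≤ L y + μ/2 * ∑ i, ‖y - P i w‖^2 := hmaj w y
    rw [hStat]
    exact mm_aux_min_grad_zero μ L gL hdiff (fun i => P i w) w hminsur
  rw [hz, Set.mem_singleton_iff] at hwS
  intro y
  rw [← hwS]
  exact hw y
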